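/- For x(t) = (t-a)^γ with γ > 0 and differentiable α : (a,b) → (0,1), the type II left Caputo derivative satisfies ᶜₐ𝒟_t^{α(t)} x(t) = (Γ(γ+1)/Γ(γ-α(t)+1)) (t-a)^{γ-α(t)} − α'(t) (Γ(γ+1)/Γ(γ-α(t)+2)) (t-a)^{γ-α(t)+1} [ln(t-a) − Ψ(γ-α(t)+2)]. -/

import Mathlib

open Real intervalIntegral Set

/-- The digamma (Psi) function: derivative of the logarithm of the Gamma function. -/
noncomputable def psi (t : ℝ) : ℝ := deriv (fun s => Real.log (Real.Gamma s)) t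

lemma real_beta {u v : ℝ} (hu : 0 < u) (hv : 0 < v) :
    ∫ x in (0:ℝ)..1, x ^ (u - 1) * (1 - x) ^ (v - 1) =
      Real.Gamma u * Real.Gamma v / Real.Gamma (u + v) := by
  have hG : Real.Gamma (u + v) ≠ 0 := (Real.Gamma_pos_of_pos (by linarith)).ne'
  rw [eq_div_iff hG]
  have key := Complex.Gamma_mul_Gamma_eq_betaIntegral
    (s := (u:ℂ)) (t := (v:ℂ)) (by simpa using hu) (by simpa using hv)
  have hbeta : Complex.betaIntegral u v =
      ((∫ x in (0:ℝ)..1, x ^ (u - 1) * (1 - x) ^ (v - 1) : ℝ) : ℂ) := by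
    rw [Complex.betaIntegral, ← intervalIntegral.integral_ofReal]
    apply intervalIntegral.integral_congr
    intro x hx
    rw [Set.uIcc_of_le (by norm_num : (0:ℝ) ≤ 1)] at hx
    have h0 : (0:ℝ) ≤ x := hx.1
    have h1 : (0:ℝ) ≤ 1 - x := by linarith [hx.2]
    push_cast
    rw [Complex.ofReal_cpow h0, Complex.ofReal_cpow h1]
    push_cast
    ring
  rw [hbeta, ← Complex.ofReal_add, Complex.Gamma_ofReal, Complex.Gamma_ofReal,
    Complex.Gamma_ofReal] at key
  have key' : Real.Gamma u * Real.Gamma v =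
      Real.Gamma (u + v) * ∫ x in (0:ℝ)..1, x ^ (u - 1) * (1 - x) ^ (v - 1) := by
    exact_mod_cast key
  rw [key', mul_comm]

lemma integral_power {a s γ β : ℝ} (has : a < s) (hγ : 0 < γ) (hβ : β ∈ Set.Ioo (0:ℝ) 1) :
    ∫ τ in a..s, (s - τ) ^ (-β) * (τ - a) ^ γ =
      (Real.Gamma (γ + 1) * Real.Gamma (1 - β) / Real.Gamma (γ + 2 - β)) *
        (s - a) ^ (γ + 1 - β) := by
  set c := s - a with hc
  have hc0 : 0 < c := by simp [hc, has]
  have e1 : (∫ τ in a..s, (s - τ) ^ (-β) * (τ - a) ^ γ) =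
      ∫ x in (0:ℝ)..c, (c - x) ^ (-β) * x ^ γ := by
    have h := intervalIntegral.integral_comp_add_right (a := (0:ℝ)) (b := c)
      (fun τ => (s - τ) ^ (-β) * (τ - a) ^ γ) a
    rw [zero_add] at h
    have hca : c + a = s := by rw [hc]; ring
    rw [hca] at h
    rw [← h]
    apply intervalIntegral.integral_congr
    intro x _
    have h1 : s - (x + a) = c - x := by rw [hc]; ring
    simp only [h1, add_sub_cancel_right]
  have e2 : (∫ x in (0:ℝ)..c, (c - x) ^ (-β) * x ^ γ) =
      c • ∫ u in (0:ℝ)..1, (c - u * c) ^ (-β) * (u * c) ^ γ := by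
    have h := intervalIntegral.integral_comp_mul_right (a := (0:ℝ)) (b := 1)
      (fun x => (c - x) ^ (-β) * x ^ γ) hc0.ne'
    rw [zero_mul, one_mul] at h
    rw [h, smul_inv_smul₀ hc0.ne']
  have e3 : (∫ u in (0:ℝ)..1, (c - u * c) ^ (-β) * (u * c) ^ γ) =
      (c ^ (-β) * c ^ γ) * ∫ u in (0:ℝ)..1, u ^ ((γ + 1) - 1) * (1 - u) ^ ((1 - β) - 1) := by
    rw [← intervalIntegral.integral_const_mul]
    apply intervalIntegral.integral_congr
    intro u hu
    rw [Set.uIcc_of_le (by norm_num : (0:ℝ) ≤ 1)] at hu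
    have h0 : (0:ℝ) ≤ u := hu.1
    have h1 : (0:ℝ) ≤ 1 - u := by linarith [hu.2]
    show (c - u * c) ^ (-β) * (u * c) ^ γ = _
    rw [show c - u * c = c * (1 - u) by ring, Real.mul_rpow hc0.le h1, Real.mul_rpow h0 hc0.le,
      show (γ + 1) - 1 = γ by ring, show (1 - β) - 1 = -β by ring]
    ring
  have e4 := real_beta (u := γ + 1) (v := 1 - β) (by linarith) (by linarith [hβ.2])
  rw [e1, e2, e3, e4, smul_eq_mul, show (γ + 1) + (1 - β) = γ + 2 - β by ring]
  rw [show c * (c ^ (-β) * c ^ γ * (Real.Gamma (γ+1) * Real.Gamma (1-β) / Real.Gamma (γ+2-β)))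
      = (Real.Gamma (γ+1) * Real.Gamma (1-β) / Real.Gamma (γ+2-β)) * (c ^ (1:ℝ) * c ^ (-β) * c ^ γ)
      by rw [Real.rpow_one]; ring,
    ← Real.rpow_add hc0, ← Real.rpow_add hc0, show (1:ℝ) + -β + γ = γ + 1 - β by ring]

/-- Type II left Caputo derivative of variable order of the power function (t-a)^γ. -/
theorem caputo_typeII_power
    (a b : ℝ) (hab : a < b) (γ : ℝ) (hγ : 0 < γ) (α : ℝ → ℝ)
    (hα : DifferentiableOn ℝ α (Set.Ioo a b))
    (hα01 : ∀ s ∈ Set.Ioo a b, α s ∈ Set.Ioo (0 : ℝ) 1)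
    (t : ℝ) (ht : t ∈ Set.Ioo a b) :
    deriv (fun s => (1 / Real.Gamma (1 - α s)) *
        ∫ τ in a..s, (s - τ) ^ (-(α s)) * (τ - a) ^ γ) t =
      (Real.Gamma (γ + 1) / Real.Gamma (γ - α t + 1)) * (t - a) ^ (γ - α t) -
        deriv α t * (Real.Gamma (γ + 1) / Real.Gamma (γ - α t + 2)) *
          (t - a) ^ (γ - α t + 1) *
          (Real.log (t - a) - psi (γ - α t + 2)) := by
  obtain ⟨hta, htb⟩ := ht
  set G : ℝ → ℝ := fun s =>
    Real.Gamma (γ + 1) * ((s - a) ^ (γ + 1 - α s) / Real.Gamma (γ + 2 - α s)) with hG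
  -- the function agrees with G on Ioo a b
  have hFG : ∀ s ∈ Set.Ioo a b,
      (1 / Real.Gamma (1 - α s)) * (∫ τ in a..s, (s - τ) ^ (-(α s)) * (τ - a) ^ γ) = G s := by
    intro s hs
    have hβ := hα01 s hs
    have hΓ1 : Real.Gamma (1 - α s) ≠ 0 :=
      (Real.Gamma_pos_of_pos (by linarith [hβ.2])).ne'
    have hΓ2 : Real.Gamma (γ + 2 - α s) ≠ 0 :=
      (Real.Gamma_pos_of_pos (by linarith [hβ.2])).ne'
    rw [integral_power hs.1 hγ hβ, hG]
    field_simp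
  have hmem : Set.Ioo a b ∈ nhds t := isOpen_Ioo.mem_nhds ⟨hta, htb⟩
  have hev : (fun s => (1 / Real.Gamma (1 - α s)) *
      ∫ τ in a..s, (s - τ) ^ (-(α s)) * (τ - a) ^ γ) =ᶠ[nhds t] G :=
    Filter.eventuallyEq_of_mem hmem hFG
  rw [hev.deriv_eq]
  -- now compute the derivative of G at t
  have hβ := hα01 t ⟨hta, htb⟩
  set β := α t with hβdef
  set α' := deriv α t with hα'
  set z := γ + 2 - β with hz
  have hz0 : 0 < z := by rw [hz]; linarith [hβ.2]
  have hc0 : 0 < t - a := by linarith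
  have hΓz : Real.Gamma z ≠ 0 := (Real.Gamma_pos_of_pos hz0).ne'
  have hdα : HasDerivAt α α' t :=
    (hα.differentiableAt hmem).hasDerivAt
  have hGammaz : HasDerivAt Real.Gamma (deriv Real.Gamma z) z := by
    refine (Real.differentiableAt_Gamma ?_).hasDerivAt
    intro m h
    have h1 : (0:ℝ) < z := hz0
    have hm : -(m:ℝ) ≤ 0 := neg_nonpos.mpr (Nat.cast_nonneg m)
    rw [h] at h1; linarith
  have hinner : HasDerivAt (fun s => γ + 2 - α s) (0 - α') t :=
    (hasDerivAt_const t (γ + 2)).sub hdα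
  have hq : HasDerivAt (fun s => Real.Gamma (γ + 2 - α s)) (deriv Real.Gamma z * (0 - α')) t :=
    by have := HasDerivAt.comp t hGammaz hinner; exact this
  have hbase : HasDerivAt (fun s => s - a) 1 t := (hasDerivAt_id t).sub_const a
  have hexp : HasDerivAt (fun s => γ + 1 - α s) (0 - α') t :=
    (hasDerivAt_const t (γ + 1)).sub hdα
  have hp : HasDerivAt (fun s => (s - a) ^ (γ + 1 - α s))
      (1 * (γ + 1 - β) * (t - a) ^ ((γ + 1 - β) - 1) +
        (0 - α') * (t - a) ^ (γ + 1 - β) * Real.log (t - a)) t :=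
    hbase.rpow hexp hc0
  have hdiv : HasDerivAt (fun s => (s - a) ^ (γ + 1 - α s) / Real.Gamma (γ + 2 - α s))
      (((1 * (γ + 1 - β) * (t - a) ^ ((γ + 1 - β) - 1) +
          (0 - α') * (t - a) ^ (γ + 1 - β) * Real.log (t - a)) * Real.Gamma z -
        (t - a) ^ (γ + 1 - β) * (deriv Real.Gamma z * (0 - α'))) / Real.Gamma z ^ 2) t :=
    hp.div hq hΓz
  have hGd : HasDerivAt G (Real.Gamma (γ + 1) *
      (((1 * (γ + 1 - β) * (t - a) ^ ((γ + 1 - β) - 1) +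
          (0 - α') * (t - a) ^ (γ + 1 - β) * Real.log (t - a)) * Real.Gamma z -
        (t - a) ^ (γ + 1 - β) * (deriv Real.Gamma z * (0 - α'))) / Real.Gamma z ^ 2)) t :=
    hdiv.const_mul _
  rw [hGd.deriv]
  -- psi identity
  have hpsi : psi z = deriv Real.Gamma z / Real.Gamma z := by
    have := (hGammaz.log hΓz).deriv
    simpa [psi] using this
  -- Gamma recurrence
  have hne : γ + 1 - β ≠ 0 := by have := hβ.2; intro h; linarith
  have hrec : Real.Gamma z = (γ + 1 - β) * Real.Gamma (γ + 1 - β) := by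
    rw [hz, show γ + 2 - β = (γ + 1 - β) + 1 by ring, Real.Gamma_add_one hne]
  have hΓ1 : Real.Gamma (γ + 1 - β) ≠ 0 := by
    intro h; rw [hrec, h, mul_zero] at hΓz; exact hΓz rfl
  rw [show γ - β + 2 = z by rw [hz]; ring, show γ - β + 1 = γ + 1 - β by ring,
    show γ + 1 - β - 1 = γ - β by ring, show γ - β = γ + 1 - β - 1 from by ring, hpsi, hrec]
  field_simp
  ring
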